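/- Let e ≥ 1, let Q = Z_{q_1} × ⋯ × Z_{q_n} with all q_i ≥ 2, and let C be an e-perfect mixed code over Q that contains the all-zero word. Then the set { c ∈ C : c has Hamming weight 2e+1 } is a mixed Steiner system MS(e+1, 2e+1, Q). -/

import Mathlib

/-- A mixed Steiner system MS(t,k,Q) over the mixed alphabet described by `q : ι → ℕ`
(words are functions `x : ι → ℕ` with `x i < q i`): a set `C` of words of Hamming
weight `k` such that every word of Hamming weight `t` is at Hamming distance exactly
`k - t` from exactly one codeword, and distinct codewords are at Hamming distance at
least `2(k-t)+1`. -/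
def IsMixedSteiner {ι : Type*} [Fintype ι] [DecidableEq ι] (q : ι → ℕ) (t k : ℕ)
    (C : Set (ι → ℕ)) : Prop :=
  (∀ c ∈ C, (∀ i, c i < q i) ∧ hammingNorm c = k) ∧
  (∀ x : ι → ℕ, (∀ i, x i < q i) → hammingNorm x = t →
    ∃! c, c ∈ C ∧ hammingDist x c = k - t) ∧
  (∀ c ∈ C, ∀ c' ∈ C, c ≠ c' → 2 * (k - t) + 1 ≤ hammingDist c c')

/-- An `e`-perfect mixed code over the mixed alphabet described by `q : ι → ℕ`:
a set of words such that every word of the space is at Hamming distance at most `e`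
from exactly one codeword. -/
def IsPerfectMixedCode {ι : Type*} [Fintype ι] [DecidableEq ι] (q : ι → ℕ) (e : ℕ)
    (C : Set (ι → ℕ)) : Prop :=
  (∀ c ∈ C, ∀ i, c i < q i) ∧
  ∀ x : ι → ℕ, (∀ i, x i < q i) → ∃! c, c ∈ C ∧ hammingDist x c ≤ e

theorem stmt9 {n : ℕ} (q : Fin n → ℕ) (hq : ∀ i, 2 ≤ q i) (e : ℕ) (he : 1 ≤ e)
    (C : Set (Fin n → ℕ)) (hC : IsPerfectMixedCode q e C)
    (h0 : (fun _ => 0) ∈ C) :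
    IsMixedSteiner q (e + 1) (2 * e + 1) {c ∈ C | hammingNorm c = 2 * e + 1} := by
  obtain ⟨hCmem, hcover⟩ := hC
  -- minimum distance of the whole code is at least 2e+1
  have hmin : ∀ c ∈ C, ∀ c' ∈ C, c ≠ c' → 2 * e + 1 ≤ hammingDist c c' := by
    intro c hc c' hc' hne
    by_contra hcon
    push_neg at hcon
    have hdle : hammingDist c c' ≤ 2 * e := by omega
    set d := hammingDist c c' with hd
    set S := Finset.univ.filter (fun i => c i ≠ c' i) with hS
    have hScard : S.card = d := rfl
    obtain ⟨T, hTS, hTcard⟩ := Finset.exists_subset_card_eq (s := S) (n := d - e)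
      (by rw [hScard]; omega)
    set y : Fin n → ℕ := fun i => if i ∈ T then c' i else c i with hy
    have hyq : ∀ i, y i < q i := by
      intro i
      by_cases h : i ∈ T <;> simp only [hy, h, if_true, if_false]
      · exact hCmem c' hc' i
      · exact hCmem c hc i
    have hyc : hammingDist y c = T.card := by
      show (Finset.univ.filter fun i => y i ≠ c i).card = T.card
      congr 1
      ext i
      simp only [Finset.mem_filter, Finset.mem_univ, true_and, hy]
      constructor
      · intro h
        by_contra hiT
        simp [hiT] at h
      · intro h
        have hiS := hTS h
        simp only [hS, Finset.mem_filter, Finset.mem_univ, true_and] at hiS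
        simp [h]
        exact fun hh => hiS hh.symm
    have hyc' : hammingDist y c' = (S \ T).card := by
      show (Finset.univ.filter fun i => y i ≠ c' i).card = (S \ T).card
      congr 1
      ext i
      simp only [Finset.mem_filter, Finset.mem_univ, true_and, hy, Finset.mem_sdiff]
      constructor
      · intro h
        by_cases hiT : i ∈ T
        · simp [hiT] at h
        · simp only [hiT, if_false] at h
          exact ⟨by simp [hS, h], hiT⟩
      · intro ⟨hiS, hiT⟩
        simp only [hS, Finset.mem_filter, Finset.mem_univ, true_and] at hiS
        simp [hiT, hiS]
    have hST : (S \ T).card = d - (d - e) := by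
      rw [Finset.card_sdiff_of_subset hTS, hScard, hTcard]
    obtain ⟨z, _, huniq⟩ := hcover y hyq
    have h1 : c = z := huniq c ⟨hc, by rw [hyc, hTcard]; omega⟩
    have h2 : c' = z := huniq c' ⟨hc', by rw [hyc', hST]; omega⟩
    exact hne (h1.trans h2.symm)
  have hzero : (fun _ : Fin n => 0) = (0 : Fin n → ℕ) := rfl
  refine ⟨?_, ?_, ?_⟩
  · intro c hc
    exact ⟨hCmem c hc.1, hc.2⟩
  · intro x hx hxwt
    obtain ⟨c, ⟨hc, hdxc⟩, huniq⟩ := hcover x hx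
    have hx0 : hammingDist x (fun _ => 0) = e + 1 := by
      rw [hzero, hammingDist_zero_right, hxwt]
    have hcne0 : c ≠ (fun _ => 0) := by
      intro h
      rw [h, hx0] at hdxc
      omega
    have hwc_ge : 2 * e + 1 ≤ hammingNorm c := by
      have := hmin c hc (fun _ => 0) h0 hcne0
      rwa [hzero, hammingDist_zero_right] at this
    have hwc_le : hammingNorm c ≤ 2 * e + 1 := by
      have htri : hammingDist c (0 : Fin n → ℕ) ≤ hammingDist c x + hammingDist x 0 :=
        hammingDist_triangle c x 0
      rw [hammingDist_zero_right, hammingDist_zero_right, hammingDist_comm c x] at htri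
      have : hammingNorm x = e + 1 := hxwt
      omega
    have hwc : hammingNorm c = 2 * e + 1 := le_antisymm hwc_le hwc_ge
    have hdge : e ≤ hammingDist x c := by
      have htri : hammingDist c (0 : Fin n → ℕ) ≤ hammingDist c x + hammingDist x 0 :=
        hammingDist_triangle c x 0
      rw [hammingDist_zero_right, hammingDist_zero_right, hammingDist_comm c x] at htri
      have : hammingNorm x = e + 1 := hxwt
      omega
    have hdeq : hammingDist x c = e := le_antisymm hdxc hdge
    refine ⟨c, ⟨⟨hc, hwc⟩, by rw [hdeq]; omega⟩, ?_⟩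
    intro c' ⟨⟨hc', _⟩, hd'⟩
    exact huniq c' ⟨hc', by omega⟩
  · intro c hc c' hc' hne
    have := hmin c hc.1 c' hc'.1 hne
    have hk : 2 * e + 1 - (e + 1) = e := by omega
    rw [hk]
    omega
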